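/- The dynamic programming table C[i,j] defined by C[i,i] = 0 and C[i,j] = min_{i≤k<j} [max(C[i,k], C[k+1,j]) + min(α + β·S[i,k], α + β·S[k+1,j])] is monotone: for all i ≤ i' ≤ j' ≤ j, C[i',j'] ≤ C[i,j]. -/
import Mathlib


open Finset

/-- Sum of block sizes over the consecutive processor range `[i, k]`. -/
noncomputable def segSum (m : ℕ → ℝ) (i k : ℕ) : ℝ := ∑ t ∈ Finset.Icc i k, m t

/-- Homogeneous ordered-tree dynamic programming table (Figure 5, `γ = 0`):
`C[i,i] = 0` and, for `i < j`,
`C[i,j] = min_{i ≤ k < j} [max(C[i,k], C[k+1,j]) + min(α + β*S[i,k], α + β*S[k+1,j])]`. -/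
noncomputable def dpC (m : ℕ → ℝ) (α β : ℝ) : ℕ → ℕ → ℝ
  | i, j =>
    if h : j ≤ i then 0
    else
      ((Finset.Ico i j).attach.inf'
        (Finset.attach_nonempty_iff.mpr (by rw [Finset.nonempty_Ico]; omega)))
        fun k =>
          have hk := Finset.mem_Ico.mp k.2
          max (dpC m α β i k.1) (dpC m α β (k.1 + 1) j) +
            min (α + β * segSum m i k.1) (α + β * segSum m (k.1 + 1) j)
termination_by i j => j - i
decreasing_by
  · omega
  · omega

lemma segSum_nonneg (m : ℕ → ℝ) (hm : ∀ t, 0 ≤ m t) (i k : ℕ) : 0 ≤ segSum m i k :=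
  Finset.sum_nonneg fun t _ => hm t

lemma segSum_mono (m : ℕ → ℝ) (hm : ∀ t, 0 ≤ m t) {a a' b b' : ℕ}
    (ha : a ≤ a') (hb : b' ≤ b) : segSum m a' b' ≤ segSum m a b :=
  Finset.sum_le_sum_of_subset_of_nonneg (Finset.Icc_subset_Icc ha hb)
    (fun t _ _ => hm t)

lemma weight_nonneg (m : ℕ → ℝ) (hm : ∀ t, 0 ≤ m t) {α β : ℝ} (hα : 0 ≤ α) (hβ : 0 ≤ β)
    (i k : ℕ) : 0 ≤ α + β * segSum m i k :=
  add_nonneg hα (mul_nonneg hβ (segSum_nonneg m hm i k))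

lemma dpC_nonneg (m : ℕ → ℝ) (hm : ∀ t, 0 ≤ m t) {α β : ℝ} (hα : 0 ≤ α) (hβ : 0 ≤ β)
    (i j : ℕ) : 0 ≤ dpC m α β i j := by
  rw [dpC]
  split
  · exact le_refl 0
  · apply Finset.le_inf'
    intro k hk
    have h1 : 0 ≤ dpC m α β i k.1 :=
      dpC_nonneg m hm hα hβ i k.1
    have h2 : 0 ≤ min (α + β * segSum m i k.1) (α + β * segSum m (k.1 + 1) j) :=
      le_min (weight_nonneg m hm hα hβ _ _) (weight_nonneg m hm hα hβ _ _)
    have := le_max_left (dpC m α β i k.1) (dpC m α β (k.1 + 1) j)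
    linarith
termination_by j - i
decreasing_by
  have := Finset.mem_Ico.mp k.2; omega

lemma dpC_le_split (m : ℕ → ℝ) (α β : ℝ) {i k j : ℕ} (hik : i ≤ k) (hkj : k < j) :
    dpC m α β i j ≤ max (dpC m α β i k) (dpC m α β (k + 1) j) +
      min (α + β * segSum m i k) (α + β * segSum m (k + 1) j) := by
  rw [dpC]
  rw [dif_neg (by omega : ¬ j ≤ i)]
  exact Finset.inf'_le _ (Finset.mem_attach _ ⟨k, Finset.mem_Ico.mpr ⟨hik, hkj⟩⟩)

/-- Monotonicity of the DP table: subranges are never more expensive than the enclosing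
range: for all `i ≤ i' ≤ j' ≤ j`, `C[i',j'] ≤ C[i,j]`. -/
theorem stmt_12 (m : ℕ → ℝ) (hm : ∀ t, 0 ≤ m t)
    (α β : ℝ) (hα : 0 ≤ α) (hβ : 0 ≤ β)
    (i i' j' j : ℕ) (h1 : i ≤ i') (h2 : i' ≤ j') (h3 : j' ≤ j) :
    dpC m α β i' j' ≤ dpC m α β i j := by
  suffices H : ∀ n i i' j' j, i ≤ i' → i' ≤ j' → j' ≤ j → j - i ≤ n →
      dpC m α β i' j' ≤ dpC m α β i j from H (j - i) i i' j' j h1 h2 h3 le_rfl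
  intro n
  induction n with
  | zero =>
    intro i i' j' j h1 h2 h3 hn
    have : i' = i ∧ j' = j := by omega
    obtain ⟨rfl, rfl⟩ := this
    exact le_refl _
  | succ n ih =>
    intro i i' j' j h1 h2 h3 hn
    by_cases he : i' = j'
    · subst he
      rw [dpC, dif_pos le_rfl]
      exact dpC_nonneg m hm hα hβ i j
    · have h2' : i' < j' := lt_of_le_of_ne h2 he
      have hij : i < j := by omega
      conv_rhs => rw [dpC]
      rw [dif_neg (by omega : ¬ j ≤ i)]
      apply Finset.le_inf'
      intro k _
      obtain ⟨hk1, hk2⟩ := Finset.mem_Ico.mp k.2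
      rcases le_or_gt j' k.1 with hc | hc
      · have hle : dpC m α β i' j' ≤ dpC m α β i k.1 := ih i i' j' k.1 h1 h2 hc (by omega)
        have := le_max_left (dpC m α β i k.1) (dpC m α β (k.1 + 1) j)
        have hmin : 0 ≤ min (α + β * segSum m i k.1) (α + β * segSum m (k.1 + 1) j) :=
          le_min (weight_nonneg m hm hα hβ _ _) (weight_nonneg m hm hα hβ _ _)
        linarith
      · rcases lt_or_ge k.1 i' with hc2 | hc2
        · have hle : dpC m α β i' j' ≤ dpC m α β (k.1 + 1) j :=
            ih (k.1 + 1) i' j' j (by omega) h2 h3 (by omega)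
          have := le_max_right (dpC m α β i k.1) (dpC m α β (k.1 + 1) j)
          have hmin : 0 ≤ min (α + β * segSum m i k.1) (α + β * segSum m (k.1 + 1) j) :=
            le_min (weight_nonneg m hm hα hβ _ _) (weight_nonneg m hm hα hβ _ _)
          linarith
        · calc dpC m α β i' j' ≤
              max (dpC m α β i' k.1) (dpC m α β (k.1 + 1) j') +
                min (α + β * segSum m i' k.1) (α + β * segSum m (k.1 + 1) j') :=
              dpC_le_split m α β hc2 hc
            _ ≤ _ := by
              apply add_le_add
              · exact max_le_max (ih i i' k.1 k.1 h1 hc2 le_rfl (by omega))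
                  (ih (k.1 + 1) (k.1 + 1) j' j le_rfl (by omega) h3 (by omega))
              · exact min_le_min
                  (by have := segSum_mono m hm h1 (le_refl k.1); nlinarith)
                  (by have := segSum_mono m hm (le_refl (k.1+1)) h3; nlinarith)
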